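/- Let N be a finite set with group assignment g : N → G (G finite), and let (θ_i^o, θ_i^i)_{i∈N} and (ω_{rs})_{r,s∈G} be positive reals with Σ_{i : g i = r} θ_i^o = 1 and Σ_{i : g i = r} θ_i^i = 1 for every r ∈ G. Let A be a random adjacency matrix with mutually independent Poisson entries A i j of mean θ_i^o θ_j^i ω_{g i, g j}, and let λ̂ = Σ_{i∈N, s∈G} [ d_{i,s}^o log d_{i,s}^o + d_{i,s}^i log d_{i,s}^i ] − Σ_{i∈N} [ d_i^o log d_i^o + d_i^i log d_i^i ] − Σ_{r,s∈G} 2 m_{rs} log m_{rs} + Σ_{r∈G} [ d_r^o log d_r^o + d_r^i log d_r^i ], computed from the random matrix A with the convention 0 log 0 = 0. Then E[λ̂] = Σ_{i∈N,s∈G} [ f(θ_i^o ω_{g i, s}) + f(θ_i^i ω_{s, g i}) ] − Σ_{i∈N} [ f(θ_i^o Σ_{s} ω_{g i, s}) + f(θ_i^i Σ_{s} ω_{s, g i}) ] − Σ_{r,s∈G} 2 f(ω_{rs}) + Σ_{r∈G} [ f(Σ_{s} ω_{rs}) + f(Σ_{s} ω_{sr}) ], where f(μ) = E[X log X] for X ~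 Poisson(μ). -/

import Mathlib

open MeasureTheory ProbabilityTheory Filter
open scoped ProbabilityTheory NNReal

/-- `x log x`, extended by `0 log 0 = 0` (note `Real.log 0 = 0`). -/
noncomputable def xlog (x : ℝ) : ℝ := x * Real.log x

/-- `f(μ) = E[X log X]` for `X ~ Poisson(μ)`. -/
noncomputable def poissonXLogX (μ : ℝ≥0) : ℝ :=
  ∫ k : ℕ, xlog (k : ℝ) ∂(poissonMeasure μ)

/-- Out-degree of node `i` to group `s`: `d_{i,s}^o = ∑_{j : g j = s} A i j`. -/
def dOut {N G : Type*} [Fintype N] [DecidableEq G] (g : N → G) (a : N → N → ℕ)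
    (i : N) (s : G) : ℕ := ∑ j ∈ Finset.univ.filter (fun j => g j = s), a i j

/-- In-degree of node `i` from group `s`: `d_{i,s}^i = ∑_{j : g j = s} A j i`. -/
def dIn {N G : Type*} [Fintype N] [DecidableEq G] (g : N → G) (a : N → N → ℕ)
    (i : N) (s : G) : ℕ := ∑ j ∈ Finset.univ.filter (fun j => g j = s), a j i

/-- Total out-degree of node `i`: `d_i^o = ∑_j A i j`. -/
def dTotOut {N : Type*} [Fintype N] (a : N → N → ℕ) (i : N) : ℕ := ∑ j : N, a i j

/-- Total in-degree of node `i`: `d_i^i = ∑_j A j i`. -/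
def dTotIn {N : Type*} [Fintype N] (a : N → N → ℕ) (i : N) : ℕ := ∑ j : N, a j i

/-- Total out-degree of group `r`: `d_r^o = ∑_{i : g i = r} d_i^o`. -/
def dGrpOut {N G : Type*} [Fintype N] [DecidableEq G] (g : N → G) (a : N → N → ℕ)
    (r : G) : ℕ := ∑ i ∈ Finset.univ.filter (fun i => g i = r), dTotOut a i

/-- Total in-degree of group `r`: `d_r^i = ∑_{i : g i = r} d_i^i`. -/
def dGrpIn {N G : Type*} [Fintype N] [DecidableEq G] (g : N → G) (a : N → N → ℕ)
    (r : G) : ℕ := ∑ i ∈ Finset.univ.filter (fun i => g i = r), dTotIn a i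

/-- Number of edges from group `r` to group `s`:
`m_{rs} = ∑_{i : g i = r} ∑_{j : g j = s} A i j`. -/
def mEdges {N G : Type*} [Fintype N] [DecidableEq G] (g : N → G) (a : N → N → ℕ)
    (r s : G) : ℕ :=
  ∑ i ∈ Finset.univ.filter (fun i => g i = r),
    ∑ j ∈ Finset.univ.filter (fun j => g j = s), a i j

/-- The log-likelihood-ratio statistic `λ̂` of the mixed-propensity model against DCSBM,
computed from an adjacency matrix `a` (with the convention `0 log 0 = 0`). -/
noncomputable def llrStat {N G : Type*} [Fintype N] [Fintype G] [DecidableEq G]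
    (g : N → G) (a : N → N → ℕ) : ℝ :=
  (∑ i : N, ∑ s : G, (xlog (dOut g a i s : ℝ) + xlog (dIn g a i s : ℝ)))
    - (∑ i : N, (xlog (dTotOut a i : ℝ) + xlog (dTotIn a i : ℝ)))
    - (∑ r : G, ∑ s : G, 2 * xlog (mEdges g a r s : ℝ))
    + (∑ r : G, (xlog (dGrpOut g a r : ℝ) + xlog (dGrpIn g a r : ℝ)))

section AuxLLR

lemma poissonMeasure_singleton (r : ℝ≥0) (n : ℕ) :
    poissonMeasure r {n} = ENNReal.ofReal (poissonPMFReal r n) := by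
  rw [ProbabilityTheory.poissonMeasure_singleton]
  rfl

lemma poissonMeasure_zero : poissonMeasure 0 = Measure.dirac 0 := by
  apply Measure.ext_of_singleton
  intro n
  rw [_root_.poissonMeasure_singleton, Measure.dirac_apply' _ (measurableSet_singleton n)]
  cases n with
  | zero => simp [poissonPMFReal]
  | succ m => simp [poissonPMFReal, Set.indicator]

lemma sum_binom (a b : ℝ) (n : ℕ) :
    ∑ k ∈ Finset.range (n+1), (a^k / k.factorial) * (b^(n-k) / (n-k).factorial)
      = (a+b)^n / n.factorial := by
  rw [add_pow, Finset.sum_div]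
  apply Finset.sum_congr rfl
  intro k hk
  have hk' : k ≤ n := Nat.lt_succ_iff.mp (Finset.mem_range.mp hk)
  have h1 : (k.factorial : ℝ) ≠ 0 := Nat.cast_ne_zero.mpr k.factorial_ne_zero
  have h2 : ((n-k).factorial : ℝ) ≠ 0 := Nat.cast_ne_zero.mpr (n-k).factorial_ne_zero
  have h3 : (n.factorial : ℝ) ≠ 0 := Nat.cast_ne_zero.mpr n.factorial_ne_zero
  have hc : (n.choose k : ℝ) * k.factorial * (n-k).factorial = n.factorial := by
    rw [← Nat.cast_mul, ← Nat.cast_mul, Nat.choose_mul_factorial_mul_factorial hk']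
  field_simp
  rw [← hc]
  ring

lemma poissonPMFReal_nonneg' {r : ℝ≥0} {n : ℕ} : 0 ≤ poissonPMFReal r n :=
  ProbabilityTheory.poissonPMFReal_nonneg

variable {Ω : Type*} [MeasureSpace Ω] [IsProbabilityMeasure (ℙ : Measure Ω)]

lemma map_add_poisson {X Y : Ω → ℕ} (hX : Measurable X) (hY : Measurable Y)
    (hind : IndepFun X Y ℙ) {μ ν : ℝ≥0}
    (hXd : Measure.map X ℙ = poissonMeasure μ) (hYd : Measure.map Y ℙ = poissonMeasure ν) :
    Measure.map (fun ω => X ω + Y ω) ℙ = poissonMeasure (μ + ν) := by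
  apply Measure.ext_of_singleton
  intro n
  rw [Measure.map_apply (f := fun ω => X ω + Y ω) (hX.add hY) (measurableSet_singleton n)]
  have hset : (fun ω => X ω + Y ω) ⁻¹' {n}
      = ⋃ k ∈ Finset.range (n+1), (X ⁻¹' {k} ∩ Y ⁻¹' {n - k}) := by
    ext ω
    simp only [Set.mem_preimage, Set.mem_singleton_iff, Set.mem_iUnion, Set.mem_inter_iff,
      Finset.mem_range, Nat.lt_succ_iff]
    constructor
    · intro h
      exact ⟨X ω, by omega, rfl, by omega⟩
    · rintro ⟨k, hk, h1, h2⟩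
      omega
  rw [hset, measure_biUnion_finset]
  · have hterm : ∀ k ∈ Finset.range (n+1),
        ℙ (X ⁻¹' {k} ∩ Y ⁻¹' {n - k})
          = ENNReal.ofReal ((poissonPMFReal μ k) * (poissonPMFReal ν (n-k))) := by
      intro k _
      rw [hind.measure_inter_preimage_eq_mul _ _ (measurableSet_singleton _)
        (measurableSet_singleton _)]
      rw [← Measure.map_apply hX (measurableSet_singleton _),
        ← Measure.map_apply hY (measurableSet_singleton _), hXd, hYd,
        _root_.poissonMeasure_singleton, _root_.poissonMeasure_singleton,
        ← ENNReal.ofReal_mul poissonPMFReal_nonneg']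
    rw [Finset.sum_congr rfl hterm, ← ENNReal.ofReal_sum_of_nonneg
      (fun k _ => mul_nonneg poissonPMFReal_nonneg' poissonPMFReal_nonneg'),
      _root_.poissonMeasure_singleton]
    congr 1
    unfold poissonPMFReal
    have : ∀ k ∈ Finset.range (n+1),
        Real.exp (-μ) * (μ:ℝ) ^ k / k.factorial * (Real.exp (-ν) * (ν:ℝ) ^ (n-k) / (n-k).factorial)
          = Real.exp (-((μ:ℝ)+ν)) * (((μ:ℝ)^k / k.factorial) * ((ν:ℝ)^(n-k) / (n-k).factorial)) := by
      intro k _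
      rw [neg_add, Real.exp_add]
      ring
    rw [Finset.sum_congr rfl this, ← Finset.mul_sum, sum_binom]
    push_cast
    ring
  · intro a _ b _ hab
    simp only [Function.onFun, Set.disjoint_left]
    rintro ω ⟨h1, h2⟩ ⟨h3, _⟩
    exact hab (by simp only [Set.mem_preimage, Set.mem_singleton_iff] at h1 h3; omega)
  · exact fun k _ => ((hX (measurableSet_singleton _)).inter (hY (measurableSet_singleton _)))

lemma map_sum_poisson {ι : Type*} [DecidableEq ι] {X : ι → Ω → ℕ}
    (hmeas : ∀ i, Measurable (X i))
    (hind : iIndepFun X ℙ) (μ : ι → ℝ≥0) (T : Finset ι)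
    (hX : ∀ i ∈ T, Measure.map (X i) ℙ = poissonMeasure (μ i)) :
    Measure.map (fun ω => ∑ i ∈ T, X i ω) ℙ = poissonMeasure (∑ i ∈ T, μ i) := by
  induction T using Finset.induction_on with
  | empty =>
      simp only [Finset.sum_empty]
      rw [show (fun _ : Ω => (0:ℕ)) = (fun _ => (0:ℕ)) from rfl, Measure.map_const,
        poissonMeasure_zero]
      simp
  | @insert a T hnot ih =>
      have hindp : IndepFun (fun ω => ∑ i ∈ T, X i ω) (X a) ℙ := by
        have := hind.indepFun_finsetSum_of_notMem hmeas hnot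
        convert this using 1
        ext ω
        simp
      simp only [Finset.sum_insert hnot]
      have : (fun ω => X a ω + ∑ i ∈ T, X i ω) = (fun ω => (∑ i ∈ T, X i ω) + X a ω) := by
        ext ω; omega
      rw [this, map_add_poisson (Finset.measurable_sum T fun i _ => hmeas i) (hmeas a)
        hindp (ih (fun i hi => hX i (Finset.mem_insert_of_mem hi)))
        (hX a (Finset.mem_insert_self a T)), add_comm]

lemma iIndepFun_of_ae_eq {ι : Type*} [Countable ι] {X Y : ι → Ω → ℕ}
    (hind : iIndepFun X ℙ)
    (hXY : ∀ i, X i =ᵐ[ℙ] Y i) :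
    iIndepFun Y ℙ := by
  rw [iIndepFun_iff_measure_inter_preimage_eq_mul] at hind ⊢
  have hae : ∀ᵐ ω ∂ℙ, ∀ i, X i ω = Y i ω := ae_all_iff.mpr hXY
  intro S sets hsets
  have h1 : ∀ i, ℙ (Y i ⁻¹' sets i) = ℙ (X i ⁻¹' sets i) := by
    intro i
    apply measure_congr
    filter_upwards [hXY i] with ω hω
    change (ω ∈ Y i ⁻¹' sets i) = (ω ∈ X i ⁻¹' sets i)
    simp [Set.mem_preimage, hω]
  have h2 : ℙ (⋂ i ∈ S, Y i ⁻¹' sets i) = ℙ (⋂ i ∈ S, X i ⁻¹' sets i) := by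
    apply measure_congr
    filter_upwards [hae] with ω hω
    change (ω ∈ ⋂ i ∈ S, Y i ⁻¹' sets i) = (ω ∈ ⋂ i ∈ S, X i ⁻¹' sets i)
    simp only [eq_iff_iff, Set.mem_iInter, Set.mem_preimage]
    exact ⟨fun h i hi => by rw [hω i]; exact h i hi,
      fun h i hi => by rw [← hω i]; exact h i hi⟩
  rw [h2, hind S hsets]
  exact Finset.prod_congr rfl fun i _ => (h1 i).symm

lemma abs_xlog_le_sq (n : ℕ) : |xlog (n : ℝ)| ≤ (n : ℝ)^2 := by
  cases n with
  | zero => simp [xlog]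
  | succ m =>
      have h1 : (0:ℝ) < (m+1 : ℕ) := by positivity
      have hlog : Real.log ((m+1 : ℕ) : ℝ) ≤ ((m+1:ℕ) : ℝ) := by
        calc Real.log ((m+1:ℕ):ℝ) ≤ ((m+1:ℕ):ℝ) - 1 := Real.log_le_sub_one_of_pos h1
        _ ≤ _ := by linarith
      have hlognn : 0 ≤ Real.log ((m+1:ℕ):ℝ) := by
        apply Real.log_nonneg; exact_mod_cast Nat.one_le_iff_ne_zero.mpr (by simp)
      rw [xlog, abs_of_nonneg (mul_nonneg h1.le hlognn)]
      calc ((m+1:ℕ):ℝ) * Real.log ((m+1:ℕ):ℝ) ≤ ((m+1:ℕ):ℝ) * ((m+1:ℕ):ℝ) :=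
        mul_le_mul_of_nonneg_left hlog h1.le
      _ = _ := (sq ((m+1:ℕ):ℝ)).symm

lemma summable_sq_poisson (r : ℝ≥0) :
    Summable (fun n : ℕ => (n : ℝ)^2 * poissonPMFReal r n) := by
  apply Summable.of_nonneg_of_le (fun n => mul_nonneg (by positivity) poissonPMFReal_nonneg')
    (f := fun n => Real.exp (-r) * ((4 * (r:ℝ))^n / n.factorial))
  · intro n
    unfold poissonPMFReal
    have hn : (n:ℝ)^2 ≤ (4:ℝ)^n := by
      have h := Nat.lt_two_pow_self (n := n)
      have : (n:ℝ) ≤ (2:ℝ)^n := by exact_mod_cast h.le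
      calc (n:ℝ)^2 ≤ ((2:ℝ)^n)^2 := by
            apply pow_le_pow_left₀ (Nat.cast_nonneg n) this
      _ = (4:ℝ)^n := by rw [← pow_mul, mul_comm, pow_mul]; norm_num
    have : (n:ℝ)^2 * (Real.exp (-r) * (r:ℝ)^n / n.factorial)
        = Real.exp (-r) * ((n:ℝ)^2 * (r:ℝ)^n / n.factorial) := by ring
    rw [this]
    have hmul : (n:ℝ)^2 * (r:ℝ)^n ≤ (4*(r:ℝ))^n := by
      rw [mul_pow]
      exact mul_le_mul_of_nonneg_right hn (pow_nonneg r.coe_nonneg n)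
    gcongr
  · exact (Real.summable_pow_div_factorial (4*(r:ℝ))).mul_left _

lemma integrable_xlog_poisson (r : ℝ≥0) :
    Integrable (fun n : ℕ => xlog (n : ℝ)) (poissonMeasure r) := by
  constructor
  · exact (measurable_from_top (f := fun n : ℕ => xlog (n:ℝ))).aestronglyMeasurable
  · rw [HasFiniteIntegral, MeasureTheory.lintegral_countable']
    have hb : ∀ n : ℕ, ‖xlog (n:ℝ)‖₊ * poissonMeasure r {n}
        ≤ ENNReal.ofReal ((n:ℝ)^2 * poissonPMFReal r n) := by
      intro n
      rw [_root_.poissonMeasure_singleton, ← enorm_eq_nnnorm, ← ofReal_norm,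
        ← ENNReal.ofReal_mul (norm_nonneg _)]
      apply ENNReal.ofReal_le_ofReal
      apply mul_le_mul_of_nonneg_right _ poissonPMFReal_nonneg'
      rw [Real.norm_eq_abs]
      exact abs_xlog_le_sq n
    calc ∑' n : ℕ, ‖xlog (n:ℝ)‖₊ * poissonMeasure r {n}
        ≤ ∑' n : ℕ, ENNReal.ofReal ((n:ℝ)^2 * poissonPMFReal r n) := ENNReal.tsum_le_tsum hb
      _ = ENNReal.ofReal (∑' n : ℕ, (n:ℝ)^2 * poissonPMFReal r n) := by
          rw [ENNReal.ofReal_tsum_of_nonneg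
            (fun n => mul_nonneg (by positivity) poissonPMFReal_nonneg')
            (summable_sq_poisson r)]
      _ < ⊤ := ENNReal.ofReal_lt_top

lemma aemeasurable_of_map_poisson {X : Ω → ℕ} {r : ℝ≥0}
    (h : Measure.map X ℙ = poissonMeasure r) : AEMeasurable X ℙ := by
  by_contra hc
  rw [Measure.map_of_not_aemeasurable hc] at h
  have := congrArg (fun m : Measure ℕ => m Set.univ) h
  simp at this

lemma integral_xlog_of_map {X : Ω → ℕ} {r : ℝ≥0}
    (h : Measure.map X ℙ = poissonMeasure r) :
    Integrable (fun ω => xlog (X ω : ℝ)) ℙ ∧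
      ∫ ω, xlog (X ω : ℝ) ∂ℙ = poissonXLogX r := by
  have hX := aemeasurable_of_map_poisson h
  have hmg : AEStronglyMeasurable (fun n : ℕ => xlog (n:ℝ)) (Measure.map X ℙ) :=
    (measurable_from_top (f := fun n : ℕ => xlog (n:ℝ))).aestronglyMeasurable
  constructor
  · have := (integrable_map_measure hmg hX).mp (h ▸ integrable_xlog_poisson r)
    exact this
  · rw [poissonXLogX, ← h, integral_map hX hmg]

end AuxLLR

/-- under the DCSBM null with group-normalized positive parameters, the
expected value of the log-likelihood-ratio statistic `λ̂` equals the expression in terms of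
`f(μ) = E[X log X]`, `X ~ Poisson(μ)` (equation (23) of the paper). -/
theorem expectation_llrStat
    {Ω : Type*} [MeasureSpace Ω] [IsProbabilityMeasure (ℙ : Measure Ω)]
    {N G : Type*} [Fintype N] [Fintype G] [DecidableEq G]
    (g : N → G) (θo θi : N → ℝ≥0) (ω : G → G → ℝ≥0)
    (hθo : ∀ i, 0 < θo i) (hθi : ∀ i, 0 < θi i) (hω : ∀ r s, 0 < ω r s)
    (hconso : ∀ r : G, ∑ i ∈ Finset.univ.filter (fun i => g i = r), θo i = 1)
    (hconsi : ∀ r : G, ∑ i ∈ Finset.univ.filter (fun i => g i = r), θi i = 1)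
    (A : N → N → Ω → ℕ)
    (hindep : iIndepFun (fun p : N × N => A p.1 p.2) ℙ)
    (hdist : ∀ i j, Measure.map (A i j) ℙ
      = poissonMeasure (θo i * θi j * ω (g i) (g j))) :
    (∫ x, llrStat g (fun i j => A i j x) ∂ℙ)
      = (∑ i : N, ∑ s : G,
            (poissonXLogX (θo i * ω (g i) s) + poissonXLogX (θi i * ω s (g i))))
        - (∑ i : N,
            (poissonXLogX (θo i * ∑ s : G, ω (g i) s)
              + poissonXLogX (θi i * ∑ s : G, ω s (g i))))
        - (∑ r : G, ∑ s : G, 2 * poissonXLogX (ω r s))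
        + (∑ r : G,
            (poissonXLogX (∑ s : G, ω r s) + poissonXLogX (∑ s : G, ω s r))) := by
  classical
  set μf : N × N → ℝ≥0 := fun p => θo p.1 * θi p.2 * ω (g p.1) (g p.2) with hμf
  have hA : ∀ p : N × N, AEMeasurable (A p.1 p.2) ℙ :=
    fun p => aemeasurable_of_map_poisson (hdist p.1 p.2)
  set B : N × N → Ω → ℕ := fun p => (hA p).mk _ with hBdef
  have hB : ∀ p, Measurable (B p) := fun p => (hA p).measurable_mk
  have hBA : ∀ p : N × N, A p.1 p.2 =ᵐ[ℙ] B p := fun p => (hA p).ae_eq_mk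
  have hindB : iIndepFun B ℙ := iIndepFun_of_ae_eq hindep hBA
  have hdistB : ∀ p : N × N, Measure.map (B p) ℙ = poissonMeasure (μf p) := fun p => by
    rw [← Measure.map_congr (hBA p)]; exact hdist p.1 p.2
  have key : ∀ T : Finset (N × N),
      Integrable (fun x => xlog ((∑ p ∈ T, B p x : ℕ) : ℝ)) ℙ ∧
      ∫ x, xlog ((∑ p ∈ T, B p x : ℕ) : ℝ) ∂ℙ = poissonXLogX (∑ p ∈ T, μf p) :=
    fun T => integral_xlog_of_map (map_sum_poisson hB hindB μf T (fun p _ => hdistB p))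
  have keyAdd : ∀ T U : Finset (N × N), Integrable
      (fun x => xlog ((∑ p ∈ T, B p x : ℕ) : ℝ) + xlog ((∑ p ∈ U, B p x : ℕ) : ℝ)) ℙ :=
    fun T U => (key T).1.add (key U).1
  have keyMul : ∀ T : Finset (N × N), Integrable
      (fun x => 2 * xlog ((∑ p ∈ T, B p x : ℕ) : ℝ)) ℙ :=
    fun T => (key T).1.const_mul 2
  set fil : G → Finset N := fun s => Finset.univ.filter (fun j => g j = s) with hfil
  -- statistic rewriting
  have he1 : ∀ x i s, dOut g (fun i j => B (i,j) x) i s = ∑ p ∈ ({i} : Finset N) ×ˢ fil s, B p x := by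
    intro x i s; rw [Finset.sum_product, Finset.sum_singleton]; rfl
  have he2 : ∀ x i s, dIn g (fun i j => B (i,j) x) i s = ∑ p ∈ fil s ×ˢ ({i} : Finset N), B p x := by
    intro x i s
    rw [Finset.sum_product]
    simp only [Finset.sum_singleton]
    rfl
  have he3 : ∀ x (i : N), dTotOut (fun i j => B (i,j) x) i
      = ∑ p ∈ ({i} : Finset N) ×ˢ (Finset.univ : Finset N), B p x := by
    intro x i; rw [Finset.sum_product, Finset.sum_singleton]; rfl
  have he4 : ∀ x (i : N), dTotIn (fun i j => B (i,j) x) i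
      = ∑ p ∈ (Finset.univ : Finset N) ×ˢ ({i} : Finset N), B p x := by
    intro x i
    rw [Finset.sum_product]
    simp only [Finset.sum_singleton]
    rfl
  have he5 : ∀ x r s, mEdges g (fun i j => B (i,j) x) r s = ∑ p ∈ fil r ×ˢ fil s, B p x := by
    intro x r s; rw [Finset.sum_product]; rfl
  have he6 : ∀ x (r : G), dGrpOut g (fun i j => B (i,j) x) r
      = ∑ p ∈ fil r ×ˢ (Finset.univ : Finset N), B p x := by
    intro x r; rw [Finset.sum_product]; rfl
  have he7 : ∀ x (r : G), dGrpIn g (fun i j => B (i,j) x) r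
      = ∑ p ∈ (Finset.univ : Finset N) ×ˢ fil r, B p x := by
    intro x r
    rw [Finset.sum_product, Finset.sum_comm]
    rfl
  -- mean computations
  have hrow : ∀ (i : N) (s : G), ∑ j ∈ fil s, μf (i, j) = θo i * ω (g i) s := by
    intro i s
    calc ∑ j ∈ fil s, μf (i, j) = ∑ j ∈ fil s, (θo i * ω (g i) s) * θi j := by
          apply Finset.sum_congr rfl
          intro j hj
          have : g j = s := (Finset.mem_filter.mp hj).2
          simp only [hμf, this]; ring
      _ = (θo i * ω (g i) s) * ∑ j ∈ fil s, θi j := by rw [Finset.mul_sum]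
      _ = θo i * ω (g i) s := by rw [hconsi s, mul_one]
  have hcol : ∀ (i : N) (s : G), ∑ j ∈ fil s, μf (j, i) = θi i * ω s (g i) := by
    intro i s
    calc ∑ j ∈ fil s, μf (j, i) = ∑ j ∈ fil s, (θi i * ω s (g i)) * θo j := by
          apply Finset.sum_congr rfl
          intro j hj
          have : g j = s := (Finset.mem_filter.mp hj).2
          simp only [hμf, this]; ring
      _ = (θi i * ω s (g i)) * ∑ j ∈ fil s, θo j := by rw [Finset.mul_sum]
      _ = θi i * ω s (g i) := by rw [hconso s, mul_one]
  have hrowT : ∀ i : N, ∑ j : N, μf (i, j) = θo i * ∑ s : G, ω (g i) s := by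
    intro i
    rw [← Finset.sum_fiberwise_of_maps_to (fun x _ => Finset.mem_univ (g x)) (fun j => μf (i, j)),
      Finset.mul_sum]
    exact Finset.sum_congr rfl fun s _ => hrow i s
  have hcolT : ∀ i : N, ∑ j : N, μf (j, i) = θi i * ∑ s : G, ω s (g i) := by
    intro i
    rw [← Finset.sum_fiberwise_of_maps_to (fun x _ => Finset.mem_univ (g x)) (fun j => μf (j, i)),
      Finset.mul_sum]
    exact Finset.sum_congr rfl fun s _ => hcol i s
  have hm1 : ∀ (i : N) (s : G), ∑ p ∈ ({i} : Finset N) ×ˢ fil s, μf p = θo i * ω (g i) s := by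
    intro i s; rw [Finset.sum_product, Finset.sum_singleton]; exact hrow i s
  have hm2 : ∀ (i : N) (s : G), ∑ p ∈ fil s ×ˢ ({i} : Finset N), μf p = θi i * ω s (g i) := by
    intro i s
    rw [Finset.sum_product]
    simp only [Finset.sum_singleton]
    exact hcol i s
  have hm3 : ∀ i : N, ∑ p ∈ ({i} : Finset N) ×ˢ (Finset.univ : Finset N), μf p
      = θo i * ∑ s : G, ω (g i) s := by
    intro i; rw [Finset.sum_product, Finset.sum_singleton]; exact hrowT i
  have hm4 : ∀ i : N, ∑ p ∈ (Finset.univ : Finset N) ×ˢ ({i} : Finset N), μf p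
      = θi i * ∑ s : G, ω s (g i) := by
    intro i
    rw [Finset.sum_product]
    simp only [Finset.sum_singleton]
    exact hcolT i
  have hm5 : ∀ r s : G, ∑ p ∈ fil r ×ˢ fil s, μf p = ω r s := by
    intro r s
    rw [Finset.sum_product]
    calc ∑ i ∈ fil r, ∑ j ∈ fil s, μf (i, j) = ∑ i ∈ fil r, θo i * ω r s := by
          apply Finset.sum_congr rfl
          intro i hi
          rw [hrow i s, (Finset.mem_filter.mp hi).2]
      _ = (∑ i ∈ fil r, θo i) * ω r s := by rw [Finset.sum_mul]
      _ = ω r s := by rw [hconso r, one_mul]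
  have hm6 : ∀ r : G, ∑ p ∈ fil r ×ˢ (Finset.univ : Finset N), μf p = ∑ s : G, ω r s := by
    intro r
    rw [Finset.sum_product]
    calc ∑ i ∈ fil r, ∑ j : N, μf (i, j) = ∑ i ∈ fil r, θo i * ∑ s : G, ω r s := by
          apply Finset.sum_congr rfl
          intro i hi
          rw [hrowT i, (Finset.mem_filter.mp hi).2]
      _ = (∑ i ∈ fil r, θo i) * ∑ s : G, ω r s := by rw [Finset.sum_mul]
      _ = ∑ s : G, ω r s := by rw [hconso r, one_mul]
  have hm7 : ∀ r : G, ∑ p ∈ (Finset.univ : Finset N) ×ˢ fil r, μf p = ∑ s : G, ω s r := by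
    intro r
    rw [Finset.sum_product, Finset.sum_comm]
    calc ∑ i ∈ fil r, ∑ j : N, μf (j, i) = ∑ i ∈ fil r, θi i * ∑ s : G, ω s r := by
          apply Finset.sum_congr rfl
          intro i hi
          rw [hcolT i, (Finset.mem_filter.mp hi).2]
      _ = (∑ i ∈ fil r, θi i) * ∑ s : G, ω s r := by rw [Finset.sum_mul]
      _ = ∑ s : G, ω s r := by rw [hconsi r, one_mul]
  -- replace A by B inside the integral
  have hstep1 : (∫ x, llrStat g (fun i j => A i j x) ∂ℙ)
      = ∫ x, llrStat g (fun i j => B (i, j) x) ∂ℙ := by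
    apply integral_congr_ae
    have haeB : ∀ᵐ x ∂ℙ, ∀ p : N × N, A p.1 p.2 x = B p x := ae_all_iff.mpr hBA
    filter_upwards [haeB] with x hx
    have : (fun i j => A i j x) = (fun i j => B (i, j) x) := by
      funext i j; exact hx (i, j)
    rw [this]
  rw [hstep1]
  set S1 : Ω → ℝ := fun x => ∑ i : N, ∑ s : G,
      (xlog ((∑ p ∈ ({i} : Finset N) ×ˢ fil s, B p x : ℕ) : ℝ)
        + xlog ((∑ p ∈ fil s ×ˢ ({i} : Finset N), B p x : ℕ) : ℝ)) with hS1
  set S2 : Ω → ℝ := fun x => ∑ i : N,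
      (xlog ((∑ p ∈ ({i} : Finset N) ×ˢ (Finset.univ : Finset N), B p x : ℕ) : ℝ)
        + xlog ((∑ p ∈ (Finset.univ : Finset N) ×ˢ ({i} : Finset N), B p x : ℕ) : ℝ)) with hS2
  set S3 : Ω → ℝ := fun x => ∑ r : G, ∑ s : G,
      2 * xlog ((∑ p ∈ fil r ×ˢ fil s, B p x : ℕ) : ℝ) with hS3
  set S4 : Ω → ℝ := fun x => ∑ r : G,
      (xlog ((∑ p ∈ fil r ×ˢ (Finset.univ : Finset N), B p x : ℕ) : ℝ)
        + xlog ((∑ p ∈ (Finset.univ : Finset N) ×ˢ fil r, B p x : ℕ) : ℝ)) with hS4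
  have hrw : ∀ x : Ω, llrStat g (fun i j => B (i, j) x) = S1 x - S2 x - S3 x + S4 x := by
    intro x
    simp only [llrStat, he1 x, he2 x, he3 x, he4 x, he5 x, he6 x, he7 x, hS1, hS2, hS3, hS4]
  simp only [hrw]
  have I1 : Integrable S1 ℙ := by
    rw [hS1]
    exact integrable_finset_sum _ fun i _ => integrable_finset_sum _ fun s _ =>
      (keyAdd _ _)
  have I2 : Integrable S2 ℙ := by
    rw [hS2]
    exact integrable_finset_sum _ fun i _ => (keyAdd _ _)
  have I3 : Integrable S3 ℙ := by
    rw [hS3]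
    exact integrable_finset_sum _ fun r _ => integrable_finset_sum _ fun s _ =>
      (keyMul _)
  have I4 : Integrable S4 ℙ := by
    rw [hS4]
    exact integrable_finset_sum _ fun r _ => (keyAdd _ _)
  rw [integral_add (f := fun x => S1 x - S2 x - S3 x) (g := S4)
      (by exact (I1.sub I2).sub I3) I4,
    integral_sub (f := fun x => S1 x - S2 x) (g := S3) (by exact I1.sub I2) I3,
    integral_sub I1 I2]
  have E1 : ∫ x, S1 x ∂ℙ = ∑ i : N, ∑ s : G,
      (poissonXLogX (θo i * ω (g i) s) + poissonXLogX (θi i * ω s (g i))) := by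
    simp only [hS1]
    rw [integral_finset_sum _ fun i _ => integrable_finset_sum _ fun s _ =>
      (keyAdd _ _)]
    apply Finset.sum_congr rfl
    intro i _
    rw [integral_finset_sum _ fun s _ => (keyAdd _ _)]
    apply Finset.sum_congr rfl
    intro s _
    rw [integral_add (key _).1 (key _).1, (key _).2, (key _).2, hm1 i s, hm2 i s]
  have E2 : ∫ x, S2 x ∂ℙ = ∑ i : N,
      (poissonXLogX (θo i * ∑ s : G, ω (g i) s)
        + poissonXLogX (θi i * ∑ s : G, ω s (g i))) := by
    simp only [hS2]
    rw [integral_finset_sum _ fun i _ => (keyAdd _ _)]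
    apply Finset.sum_congr rfl
    intro i _
    rw [integral_add (key _).1 (key _).1, (key _).2, (key _).2, hm3 i, hm4 i]
  have E3 : ∫ x, S3 x ∂ℙ = ∑ r : G, ∑ s : G, 2 * poissonXLogX (ω r s) := by
    simp only [hS3]
    rw [integral_finset_sum _ fun r _ => integrable_finset_sum _ fun s _ =>
      (keyMul _)]
    apply Finset.sum_congr rfl
    intro r _
    rw [integral_finset_sum _ fun s _ => (keyMul _)]
    apply Finset.sum_congr rfl
    intro s _
    rw [integral_const_mul 2, (key _).2, hm5 r s]
  have E4 : ∫ x, S4 x ∂ℙ = ∑ r : G,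
      (poissonXLogX (∑ s : G, ω r s) + poissonXLogX (∑ s : G, ω s r)) := by
    simp only [hS4]
    rw [integral_finset_sum _ fun r _ => (keyAdd _ _)]
    apply Finset.sum_congr rfl
    intro r _
    rw [integral_add (key _).1 (key _).1, (key _).2, (key _).2, hm6 r, hm7 r]
  rw [E1, E2, E3, E4]
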